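/- The arithmetic sequence (a_n) with a_n = 2^{n(n+1)/2} (i.e., with ratios b_n = 2^n) is strongly non density lifting invariant (strongly non dli). -/

import Mathlib

open Filter Topology Set

noncomputable section

/-- The sequence of ratios `b n = a n / a (n-1)` of an arithmetic sequence. -/
def ratios (a : ℕ → ℕ) (n : ℕ) : ℕ := a n / a (n - 1)

/-- An arithmetic sequence: `a 0 = 1`, strictly increasing, each term divides the next. -/
def IsArithSeq (a : ℕ → ℕ) : Prop :=
  a 0 = 1 ∧ (∀ n, a n < a (n + 1)) ∧ (∀ n, a n ∣ a (n + 1))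

/-- The indices `n_k` with `a k = d (n k)`: `n 0 = 1`, `n (k+1) = n k + (b (k+1) - 1)`. -/
def nseq (a : ℕ → ℕ) : ℕ → ℕ
  | 0 => 1
  | k + 1 => nseq a k + (ratios a (k + 1) - 1)

/-- The lifting function `L(A) = ⋃_{k ∈ A} [n_{k-1}, n_k - 1]`. -/
def liftSet (a : ℕ → ℕ) (A : Set ℕ) : Set ℕ :=
  ⋃ k ∈ A, Set.Icc (nseq a (k - 1)) (nseq a k - 1)

/-- `A ⊆ ℕ` has natural density `δ`. -/
def HasDensity (A : Set ℕ) (δ : ℝ) : Prop :=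
  Tendsto (fun n : ℕ => ((A ∩ Set.Iio n).ncard : ℝ) / n) atTop (𝓝 δ)

/-- The upper natural density of `A ⊆ ℕ`. -/
def upperDensity (A : Set ℕ) : ℝ :=
  limsup (fun n : ℕ => ((A ∩ Set.Iio n).ncard : ℝ) / n) atTop

/-- The sequence `(d n)`: the increasing enumeration of `{r * a k : k ≥ 0, 1 ≤ r < b (k+1)}`. -/
def dSeq (a : ℕ → ℕ) : ℕ → ℕ :=
  Nat.nth (fun m => ∃ k r : ℕ, 1 ≤ r ∧ r < ratios a (k + 1) ∧ m = r * a k)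

/-- The characterized subgroup `t_{(u n)}(𝕋)`. -/
def charSub (u : ℕ → ℤ) : Set (AddCircle (1 : ℝ)) :=
  {x | Tendsto (fun n => u n • x) atTop (𝓝 0)}

/-- The statistically characterized subgroup `t^s_{(u n)}(𝕋)`. -/
def statChar (u : ℕ → ℤ) : Set (AddCircle (1 : ℝ)) :=
  {x | ∀ ε : ℝ, 0 < ε → HasDensity {n : ℕ | ε ≤ ‖u n • x‖} 0}

/-- Density lifting invariant. -/
def Dli (a : ℕ → ℕ) : Prop :=
  ∀ A : Set ℕ, A.Infinite → HasDensity A 0 → HasDensity (liftSet a A) 0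

/-- Weakly density lifting invariant. -/
def WeaklyDli (a : ℕ → ℕ) : Prop :=
  ∃ A : Set ℕ, A.Infinite ∧ ∀ m : ℕ, HasDensity (liftSet a ((fun x => x - m) '' A)) 0

/-- Strongly non density lifting invariant. -/
def StronglyNonDli (a : ℕ → ℕ) : Prop :=
  ∀ A : Set ℕ, A.Infinite → 0 < upperDensity (liftSet a A)

lemma ratios_two_pow (n : ℕ) (hn : 1 ≤ n) :
    ratios (fun n => 2 ^ (n * (n + 1) / 2)) n = 2 ^ n := by
  obtain ⟨m, rfl⟩ := Nat.exists_eq_add_of_le hn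
  unfold ratios
  simp only
  obtain ⟨c, hc⟩ := Nat.even_mul_succ_self m
  have h1 : m * (m + 1) / 2 = c := by omega
  have h2 : (1 + m) * (1 + m + 1) / 2 = c + m + 1 := by
    have : (1 + m) * (1 + m + 1) = m * (m + 1) + 2 * (m + 1) := by ring
    omega
  have h3 : (1 + m - 1) = m := by omega
  rw [h3, h1, h2]
  rw [Nat.pow_div (by omega) (by norm_num)]
  congr 1
  omega

lemma nseq_two_pow (k : ℕ) :
    nseq (fun n => 2 ^ (n * (n + 1) / 2)) k = 2 ^ (k + 1) - 1 - k := by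
  induction k with
  | zero => simp [nseq]
  | succ k ih =>
    have hr := ratios_two_pow (k + 1) (by omega)
    have h1 : k + 1 < 2 ^ (k + 1) := Nat.lt_two_pow_self (n := k + 1)
    have h2 : 2 ^ (k + 1 + 1) = 2 * 2 ^ (k + 1) := by ring
    rw [nseq, ih, hr]
    omega

/-- the sequence `a n = 2 ^ (n (n+1) / 2)` is strongly non dli. -/
theorem stronglyNonDli_two_pow :
    StronglyNonDli (fun n => 2 ^ (n * (n + 1) / 2)) := by
  set a : ℕ → ℕ := fun n => 2 ^ (n * (n + 1) / 2) with ha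
  intro A hA
  set f : ℕ → ℝ := fun n => (((liftSet a A) ∩ Set.Iio n).ncard : ℝ) / n with hf
  have hbound : ∀ n : ℕ, f n ≤ 1 := by
    intro n
    rcases Nat.eq_zero_or_pos n with rfl | hn
    · simp [hf]
    · have hIio : (Set.Iio n).ncard = n := by
        rw [← Finset.coe_Iio, Set.ncard_coe_finset, Nat.card_Iio]
      have hcard : ((liftSet a A) ∩ Set.Iio n).ncard ≤ n :=
        le_trans (Set.ncard_le_ncard Set.inter_subset_right (Set.finite_Iio n)) hIio.le
      rw [hf]
      rw [div_le_one (by positivity)]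
      exact_mod_cast hcard
  have hb : Filter.IsBoundedUnder (· ≤ ·) Filter.atTop f :=
    ⟨1, Filter.eventually_map.mpr (Filter.Eventually.of_forall hbound)⟩
  have hfreq : ∃ᶠ n in Filter.atTop, (1 / 4 : ℝ) ≤ f n := by
    rw [Filter.frequently_atTop]
    intro N
    obtain ⟨k, hkA, hkN⟩ := hA.exists_gt N
    refine ⟨nseq a k, ?_, ?_⟩
    · have h1 : k + 1 < 2 ^ (k + 1) := Nat.lt_two_pow_self (n := k + 1)
      have hnk : nseq a k = 2 ^ (k + 1) - 1 - k := nseq_two_pow k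
      have hk1 : 1 ≤ k := by omega
      have h2 : 2 * (k + 1) ≤ 2 ^ (k + 1) := by
        calc 2 * (k + 1) ≤ 2 * 2 ^ k := by
              have := Nat.lt_two_pow_self (n := k); omega
          _ = 2 ^ (k + 1) := by ring
      omega
    · have hk1 : 1 ≤ k := by omega
      have hnk : nseq a k = 2 ^ (k + 1) - 1 - k := nseq_two_pow k
      have hnk1 : nseq a (k - 1) = 2 ^ k - 1 - (k - 1) := by
        have h := nseq_two_pow (k - 1)
        rw [Nat.sub_add_cancel hk1] at h
        exact h
      have hpk : k < 2 ^ k := Nat.lt_two_pow_self (n := k)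
      have hpk1 : 2 ^ (k + 1) = 2 * 2 ^ k := by ring
      -- the interval is inside liftSet a A ∩ Iio (nseq a k)
      have hsub : Set.Icc (nseq a (k - 1)) (nseq a k - 1) ⊆
          (liftSet a A) ∩ Set.Iio (nseq a k) := by
        intro x hx
        constructor
        · exact Set.mem_biUnion hkA hx
        · have hx2 := hx.2
          simp only [Set.mem_Iio]
          omega
      have hIcc : (Set.Icc (nseq a (k - 1)) (nseq a k - 1)).ncard =
          nseq a k - 1 + 1 - nseq a (k - 1) := by
        rw [← Finset.coe_Icc, Set.ncard_coe_finset, Nat.card_Icc]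
      have h1 : (Set.Icc (nseq a (k - 1)) (nseq a k - 1)).ncard ≤
          ((liftSet a A) ∩ Set.Iio (nseq a k)).ncard :=
        Set.ncard_le_ncard hsub ((Set.finite_Iio _).inter_of_right _)
      have hcard : nseq a k - nseq a (k - 1) ≤
          ((liftSet a A) ∩ Set.Iio (nseq a k)).ncard := by omega
      have hdiff : nseq a k - nseq a (k - 1) = 2 ^ k - 1 := by omega
      rw [hf]
      have hpos : (0 : ℝ) < (nseq a k : ℝ) := by
        have : 1 ≤ nseq a k := by omega
        exact_mod_cast this
      rw [le_div_iff₀ hpos]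
      have hle : ((2 : ℝ) ^ k - 1) ≤ (((liftSet a A) ∩ Set.Iio (nseq a k)).ncard : ℝ) := by
        have : (2 : ℕ) ^ k - 1 ≤ ((liftSet a A) ∩ Set.Iio (nseq a k)).ncard := by omega
        calc ((2 : ℝ) ^ k - 1) = (((2 : ℕ) ^ k - 1 : ℕ) : ℝ) := by
              push_cast [Nat.cast_sub (Nat.one_le_two_pow : 1 ≤ 2 ^ k)]
              ring
          _ ≤ _ := by exact_mod_cast this
      refine le_trans ?_ hle
      -- 1/4 * nseq a k ≤ 2^k - 1
      have hnkle : (nseq a k : ℝ) ≤ 2 * 2 ^ k := by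
        have : nseq a k ≤ 2 * 2 ^ k := by omega
        exact_mod_cast this
      have h4 : (4 : ℝ) * (2 ^ k - 1) ≥ nseq a k := by
        have : nseq a k ≤ 4 * (2 ^ k - 1) := by
          have : 4 ≤ 2 * 2 ^ k := by
            have : 2 ≤ 2 ^ k := by
              calc (2:ℕ) = 2 ^ 1 := rfl
                _ ≤ 2 ^ k := Nat.pow_le_pow_right (by norm_num) hk1
            omega
          omega
        have h5 : ((4 * (2 ^ k - 1) : ℕ) : ℝ) = 4 * ((2:ℝ) ^ k - 1) := by
          push_cast [Nat.cast_sub (Nat.one_le_two_pow : 1 ≤ 2 ^ k)]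
          ring
        calc (nseq a k : ℝ) ≤ ((4 * (2 ^ k - 1) : ℕ) : ℝ) := by exact_mod_cast this
          _ = 4 * ((2:ℝ) ^ k - 1) := h5
      linarith
  have hle : (1 / 4 : ℝ) ≤ upperDensity (liftSet a A) :=
    Filter.le_limsup_of_frequently_le hfreq hb
  linarith
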